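/- Let M₀ = (1/2)(A₀ + B₀) with A₀ = [[cosh x, sinh x],[−cosh x, −sinh x]] and B₀ = [[1,1],[1,1]]. Then for all m ≥ 1, 2·M₀^m = (e^{−x}/2)^{m−1}·A₀ + B₀ + (e^x/(2−e^{−x}))·(1 − (e^{−x}/2)^{m−1})·D₀, where D₀ = [[1,1],[−1,−1]]. -/

import Mathlib

open PowerSeries

private lemma cusick_aux {R : Type*} [CommRing R] (e f s c : R)
    (hs : s * 2 = 1) (hc : c * (2 - f) = e) (n : ℕ) :
    (2 : R) • ((s • ((!![s*(e+f), s*(e-f); -(s*(e+f)), -(s*(e-f))] : Matrix (Fin 2) (Fin 2) R)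
        + !![1,1;1,1])) ^ (n+1))
      = ((s * f) ^ n) • (!![s*(e+f), s*(e-f); -(s*(e+f)), -(s*(e-f))] : Matrix (Fin 2) (Fin 2) R)
        + !![1,1;1,1]
        + (c * (1 - (s*f)^n)) • (!![1,1;-1,-1] : Matrix (Fin 2) (Fin 2) R) := by
  set A : Matrix (Fin 2) (Fin 2) R := !![s*(e+f), s*(e-f); -(s*(e+f)), -(s*(e-f))] with hA
  set B : Matrix (Fin 2) (Fin 2) R := !![1,1;1,1] with hB
  set D : Matrix (Fin 2) (Fin 2) R := !![1,1;-1,-1] with hD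
  have entrytac : True := trivial
  have hAA : A * A = f • A := by
    ext i j; fin_cases i <;> fin_cases j <;>
      simp [hA, Matrix.mul_apply, Fin.sum_univ_two] <;>
      first
        | ring1
        | linear_combination (s*f*(e+f))*hs
        | linear_combination (-(s*f*(e+f)))*hs
        | linear_combination (s*f*(e-f))*hs
        | linear_combination (-(s*f*(e-f)))*hs
  have hAB : A * B = e • D := by
    ext i j; fin_cases i <;> fin_cases j <;>
      simp [hA, hB, hD, Matrix.mul_apply, Fin.sum_univ_two] <;>
      first
        | ring1
        | linear_combination e*hs
        | linear_combination (-e)*hs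
  have hBA : B * A = 0 := by
    ext i j; fin_cases i <;> fin_cases j <;>
      simp [hA, hB, Matrix.mul_apply, Fin.sum_univ_two] <;> ring
  have hBB : B * B = (2:R) • B := by
    ext i j; fin_cases i <;> fin_cases j <;>
      simp [hB, Matrix.mul_apply, Fin.sum_univ_two] <;> norm_num
  have hDA : D * A = 0 := by
    ext i j; fin_cases i <;> fin_cases j <;>
      simp [hA, hD, Matrix.mul_apply, Fin.sum_univ_two] <;> ring
  have hDB : D * B = (2:R) • D := by
    ext i j; fin_cases i <;> fin_cases j <;>
      simp [hB, hD, Matrix.mul_apply, Fin.sum_univ_two] <;> ring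
  induction n with
  | zero =>
      rw [pow_one]
      match_scalars <;> first | ring1 | linear_combination hs | linear_combination (-1:R)*hs
  | succ k ih =>
      have hstep : (2 : R) • (s • (A + B)) ^ (k+1+1)
          = ((2 : R) • (s • (A + B)) ^ (k+1)) * (s • (A + B)) := by
        rw [pow_succ, Matrix.smul_mul]
      rw [hstep, ih]
      simp only [Matrix.add_mul, Matrix.mul_smul, Matrix.smul_mul, Matrix.mul_add,
        hAA, hAB, hBA, hBB, hDA, hDB, smul_smul, smul_zero, add_zero, zero_add,
        smul_add, mul_zero, Matrix.zero_mul]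
      match_scalars <;>
        first
          | ring1
          | linear_combination hs
          | linear_combination (-1:R)*hs
          | linear_combination c*hs + ((s*f)^k*s)*hc
          | linear_combination c*hs - ((s*f)^k*s)*hc
          | linear_combination (-c)*hs + ((s*f)^k*s)*hc
          | linear_combination (-c)*hs - ((s*f)^k*s)*hc

/-- closed form for powers of `M₀ = (A₀+B₀)/2`, with entries in
the ring of formal power series over ℝ, where
`A₀ = [[cosh, sinh],[−cosh, −sinh]]`, `B₀ = [[1,1],[1,1]]`,
`D₀ = [[1,1],[−1,−1]]`. -/
theorem cusick_stmt13 (m : ℕ) (hm : 1 ≤ m) :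
    let coshS : PowerSeries ℝ :=
      PowerSeries.C (R := ℝ) (1 / 2) * (PowerSeries.exp ℝ + PowerSeries.rescale (-1 : ℝ) (PowerSeries.exp ℝ))
    let sinhS : PowerSeries ℝ :=
      PowerSeries.C (R := ℝ) (1 / 2) * (PowerSeries.exp ℝ - PowerSeries.rescale (-1 : ℝ) (PowerSeries.exp ℝ))
    let A₀ : Matrix (Fin 2) (Fin 2) (PowerSeries ℝ) :=
      !![coshS, sinhS; -coshS, -sinhS]
    let B₀ : Matrix (Fin 2) (Fin 2) (PowerSeries ℝ) := !![1, 1; 1, 1]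
    let D₀ : Matrix (Fin 2) (Fin 2) (PowerSeries ℝ) := !![1, 1; -1, -1]
    let M₀ : Matrix (Fin 2) (Fin 2) (PowerSeries ℝ) :=
      (PowerSeries.C (R := ℝ) (1 / 2)) • (A₀ + B₀)
    (2 : PowerSeries ℝ) • M₀ ^ m
      = ((PowerSeries.C (R := ℝ) (1 / 2) * PowerSeries.rescale (-1 : ℝ) (PowerSeries.exp ℝ)) ^ (m - 1)) • A₀
        + B₀
        + ((PowerSeries.exp ℝ)
            * (2 - PowerSeries.rescale (-1 : ℝ) (PowerSeries.exp ℝ))⁻¹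
            * (1 - (PowerSeries.C (R := ℝ) (1 / 2) * PowerSeries.rescale (-1 : ℝ) (PowerSeries.exp ℝ)) ^ (m - 1))) • D₀ := by
  intro coshS sinhS A₀ B₀ D₀ M₀
  obtain ⟨n, rfl⟩ : ∃ n, m = n + 1 := ⟨m - 1, (Nat.succ_pred_eq_of_pos hm).symm⟩
  rw [show n + 1 - 1 = n from rfl]
  have hs : PowerSeries.C (R := ℝ) (1 / 2) * 2 = 1 := by
    rw [show (2 : PowerSeries ℝ) = PowerSeries.C (R := ℝ) 2 from (map_ofNat (PowerSeries.C (R := ℝ)) 2).symm, ← map_mul]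
    norm_num
  have hc : PowerSeries.exp ℝ * (2 - PowerSeries.rescale (-1 : ℝ) (PowerSeries.exp ℝ))⁻¹
      * (2 - PowerSeries.rescale (-1 : ℝ) (PowerSeries.exp ℝ)) = PowerSeries.exp ℝ := by
    rw [mul_assoc, PowerSeries.inv_mul_cancel, mul_one]
    have : PowerSeries.constantCoeff (R := ℝ) (PowerSeries.rescale (-1 : ℝ) (PowerSeries.exp ℝ)) = 1 := by
      rw [← PowerSeries.coeff_zero_eq_constantCoeff_apply, PowerSeries.coeff_rescale]
      simp [PowerSeries.coeff_zero_eq_constantCoeff]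
    rw [map_sub, this, map_ofNat]
    norm_num
  exact cusick_aux (PowerSeries.exp ℝ) (PowerSeries.rescale (-1 : ℝ) (PowerSeries.exp ℝ))
    (PowerSeries.C (R := ℝ) (1 / 2))
    (PowerSeries.exp ℝ * (2 - PowerSeries.rescale (-1 : ℝ) (PowerSeries.exp ℝ))⁻¹) hs hc n
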